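/- arXiv:1901.04869 — 6 statements merged into one kernel-verified Lean document; each statement's English description precedes it below -/
import Mathlib

section
/- Let N, n, c be natural numbers with c ≤ n ≤ N and N ≥ 1. If the single-sampling plan (n, c) satisfies the MID acceptance-quality-limit condition for a lot of size N, i.e. for every natural number M with M ≤ N and (M : ℝ)/N ≥ 1/100 one has Pac(M, N, n, c) < 19/20, then N > 100·c. -/
/-- Hypergeometric acceptance probability: probability of finding at most `c`
defective items in a sample of `n` items drawn without replacement from a lot
of `N` items containing `M` defective items. -/
noncomputable def hypPac (M N n c : ℕ) : ℝ :=
  ∑ k ∈ Finset.range (c + 1),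
    ((M.choose k * (N - M).choose (n - k) : ℕ) : ℝ) / (N.choose n : ℝ)

theorem lower_bound_lot_size (N n c : ℕ) (hcn : c ≤ n) (hnN : n ≤ N) (hN : 1 ≤ N)
    (hMID : ∀ M : ℕ, M ≤ N → (M : ℝ) / N ≥ 1 / 100 → hypPac M N n c < 19 / 20) :
    N > 100 * c := by
  by_contra h
  push_neg at h
  set M := (N + 99) / 100 with hMdef
  have hMN : M ≤ N := by omega
  have hMc : M ≤ c := by omega
  have hM1 : 1 ≤ M := by omega
  have h100M : N ≤ 100 * M := by omega
  have hratio : (M : ℝ) / N ≥ 1 / 100 := by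
    have h' : (N : ℝ) ≤ 100 * M := by exact_mod_cast h100M
    rw [ge_iff_le, div_le_div_iff₀ (by norm_num) (by exact_mod_cast hN)]
    linarith
  have hsum : ∑ k ∈ Finset.range (c + 1), M.choose k * (N - M).choose (n - k)
      = N.choose n := by
    have hV : N.choose n = ∑ k ∈ Finset.range (n + 1), M.choose k * (N - M).choose (n - k) := by
      have := Nat.add_choose_eq M (N - M) n
      rw [Nat.add_sub_cancel' hMN] at this
      rw [this, Finset.Nat.sum_antidiagonal_eq_sum_range_succ_mk]
    rw [hV]
    apply Finset.sum_subset (Finset.range_subset_range.mpr (Nat.succ_le_succ hcn))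
    intro x hx hx'
    simp only [Finset.mem_range] at *
    have : M < x := by omega
    rw [Nat.choose_eq_zero_of_lt this, Nat.zero_mul]
  have hpos : 0 < N.choose n := Nat.choose_pos hnN
  have hPac : hypPac M N n c = 1 := by
    unfold hypPac
    rw [← Finset.sum_div]
    rw [← Nat.cast_sum, hsum]
    exact div_self (by exact_mod_cast hpos.ne')
  have := hMID M hMN hratio
  rw [hPac] at this
  linarith
end

section
/- Let n, c be natural numbers with c < n. The binomial operating characteristic p ↦ Pac(p, n, c) is strictly decreasing on the interval [0, 1]: for all real p, q with 0 ≤ p < q ≤ 1, Pac(q, n, c) < Pac(p, n, c). -/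
/-- Binomial operating characteristic: acceptance probability of the plan `(n, c)`
at quality level `p`. -/
noncomputable def binPac (p : ℝ) (n c : ℕ) : ℝ :=
  ∑ k ∈ Finset.range (c + 1), (n.choose k : ℝ) * p ^ k * (1 - p) ^ (n - k)

private lemma binPac_hasDerivAt (m c : ℕ) (hcm : c ≤ m) (p : ℝ) :
    HasDerivAt (fun x => binPac x (m + 1) c)
      (-((m + 1) * ((m.choose c : ℝ)) * p ^ c * (1 - p) ^ (m - c))) p := by
  set a : ℕ → ℝ := fun k =>
    match k with
    | 0 => 0
    | j + 1 => ((m + 1 : ℕ) : ℝ) * (m.choose j : ℝ) * p ^ j * (1 - p) ^ (m - j) with ha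
  have key : ∀ k ∈ Finset.range (c + 1),
      HasDerivAt (fun x : ℝ => ((m + 1).choose k : ℝ) * x ^ k * (1 - x) ^ (m + 1 - k))
        (a k - a (k + 1)) p := by
    intro k hk
    rw [Finset.mem_range] at hk
    have hk' : k ≤ m := by omega
    have h1 : HasDerivAt (fun x : ℝ => ((m + 1).choose k : ℝ) * x ^ k)
        (((m + 1).choose k : ℝ) * (k * p ^ (k - 1))) p :=
      (hasDerivAt_pow k p).const_mul _
    have h2 : HasDerivAt (fun x : ℝ => (1 - x) ^ (m + 1 - k))
        (((m + 1 - k : ℕ) : ℝ) * (1 - p) ^ (m + 1 - k - 1) * (-1)) p := by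
      have := (hasDerivAt_pow (m + 1 - k) (1 - p)).comp p
        ((hasDerivAt_id p).const_sub 1)
      exact this.congr_deriv (by ring)
    have h3 : HasDerivAt (fun x : ℝ => ((m + 1).choose k : ℝ) * x ^ k * (1 - x) ^ (m + 1 - k))
      (((m + 1).choose k : ℝ) * (k * p ^ (k - 1)) * (1 - p) ^ (m + 1 - k) +
        ((m + 1).choose k : ℝ) * p ^ k * (((m + 1 - k : ℕ) : ℝ) * (1 - p) ^ (m + 1 - k - 1) * (-1))) p :=
      h1.mul h2
    have e1 : (fun x : ℝ => ((m + 1).choose k : ℝ) * x ^ k * (1 - x) ^ (m + 1 - k)) =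
        fun x => ((m + 1).choose k : ℝ) * x ^ k * (1 - x) ^ (m + 1 - k) := rfl
    convert h3 using 1
    cases k with
    | zero =>
        have e0 : m + 1 - 0 - 1 = m := by omega
        simp only [ha, e0]
        norm_num
    | succ j =>
        simp only [ha]
        have e2 : m + 1 - (j + 1) = m - j := by omega
        have e3 : m + 1 - (j + 1) - 1 = m - (j + 1) := by omega
        have e4 : m - j = (m - (j + 1)) + 1 := by omega
        have e5 : m - j - 1 = m - (j + 1) := by omega
        have hj1 : j + 1 - 1 = j := rfl
        have id1 : ((m + 1 : ℕ) : ℝ) * (m.choose j : ℝ) =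
            ((m + 1).choose (j + 1) : ℝ) * ((j + 1 : ℕ) : ℝ) := by
          rw [← Nat.cast_mul, ← Nat.cast_mul, Nat.add_one_mul_choose_eq]
        have id2 : ((m + 1).choose (j + 1) : ℝ) * ((m - j : ℕ) : ℝ) =
            ((m + 1 : ℕ) : ℝ) * (m.choose (j + 1) : ℝ) := by
          rw [← Nat.cast_mul, ← Nat.cast_mul, ← e2, ← Nat.choose_mul_succ_eq, Nat.mul_comm]
        rw [e2, e3, hj1, e4, e5] at *
        linear_combination (p ^ j * (1 - p) ^ (m - (j + 1) + 1)) * id1 +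
          (p ^ (j + 1) * (1 - p) ^ (m - (j + 1))) * id2
  have hsum := HasDerivAt.fun_sum key
  have htel : ∑ k ∈ Finset.range (c + 1), (a k - a (k + 1)) = a 0 - a (c + 1) :=
    Finset.sum_range_sub' a (c + 1)
  have : HasDerivAt (fun x => binPac x (m + 1) c) (a 0 - a (c + 1)) p := by
    rw [← htel]
    exact hsum
  simpa [ha, binPac] using this

theorem binPac_strictAnti (n c : ℕ) (hcn : c < n) :
    ∀ p q : ℝ, 0 ≤ p → p < q → q ≤ 1 → binPac q n c < binPac p n c := by
  obtain ⟨m, rfl⟩ : ∃ m, n = m + 1 := ⟨n - 1, by omega⟩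
  have hcm : c ≤ m := by omega
  have hd : ∀ p : ℝ, HasDerivAt (fun x => binPac x (m + 1) c)
      (-((m + 1) * ((m.choose c : ℝ)) * p ^ c * (1 - p) ^ (m - c))) p :=
    fun p => binPac_hasDerivAt m c hcm p
  have hanti : StrictAntiOn (fun x => binPac x (m + 1) c) (Set.Icc 0 1) := by
    apply strictAntiOn_of_deriv_neg (convex_Icc 0 1)
    · have hdiff : Differentiable ℝ (fun x => binPac x (m + 1) c) :=
        fun p => (hd p).differentiableAt
      exact hdiff.continuous.continuousOn
    · intro x hx
      rw [interior_Icc, Set.mem_Ioo] at hx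
      rw [(hd x).deriv]
      have hpow1 : (0:ℝ) < x ^ c := pow_pos hx.1 c
      have hpow2 : (0:ℝ) < (1 - x) ^ (m - c) := pow_pos (by linarith [hx.2]) _
      have hch : (0:ℝ) < (m.choose c : ℝ) := by
        exact_mod_cast Nat.choose_pos hcm
      have hm : (0:ℝ) < (m:ℝ) + 1 := by positivity
      have := mul_pos (mul_pos (mul_pos hm hch) hpow1) hpow2
      linarith
  intro p q hp hpq hq
  exact hanti ⟨hp, hpq.le.trans hq⟩ ⟨le_trans hp hpq.le, hq⟩ hpq
end

section
/- Let N, n, M be natural numbers with N ≥ 1, M ≤ N and n ≤ N. Then the zero-acceptance hypergeometric acceptance probability is bounded above by the binomial one at quality level p = M/N: (C(N−M, n) : ℝ)/C(N, n) ≤ ((N − M : ℝ)/N)^n. (The binomial model is conservative for zero-acceptance sampling: it never underestimates the acceptance probability of a finite lot.) -/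
open Finset in
lemma aux_hyper_le (n K N : ℕ) (hKN : K ≤ N) (hN : 1 ≤ N) :
    (K.choose n : ℝ) / N.choose n ≤ ((K : ℝ) / N) ^ n := by
  by_cases hnK : n ≤ K
  · have hnN : n ≤ N := hnK.trans hKN
    have hnf : (0:ℝ) < (n.factorial : ℝ) := by positivity
    have h1 : (K.choose n : ℝ) / N.choose n
        = (K.descFactorial n : ℝ) / N.descFactorial n := by
      rw [Nat.descFactorial_eq_factorial_mul_choose, Nat.descFactorial_eq_factorial_mul_choose]
      push_cast
      rw [mul_div_mul_left _ _ (ne_of_gt hnf)]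
    rw [h1, Nat.descFactorial_eq_prod_range, Nat.descFactorial_eq_prod_range]
    push_cast
    rw [← Finset.prod_div_distrib,
      show ((K:ℝ)/N)^n = ∏ _i ∈ range n, ((K:ℝ)/N) by
        rw [Finset.prod_const, Finset.card_range]]
    apply Finset.prod_le_prod
    · intro i hi
      have hiK : i ≤ K := le_of_lt (lt_of_lt_of_le (mem_range.mp hi) hnK)
      have hiN : i ≤ N := hiK.trans hKN
      rw [Nat.cast_sub hiK, Nat.cast_sub hiN]
      have : (0:ℝ) < (N:ℝ) - i := by
        rcases lt_of_lt_of_le (lt_of_lt_of_le (mem_range.mp hi) hnK) hKN with h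
        have : (i:ℝ) < N := by exact_mod_cast h
        linarith
      have hKi : (0:ℝ) ≤ (K:ℝ) - i := by
        have : (i:ℝ) ≤ K := by exact_mod_cast hiK
        linarith
      exact div_nonneg hKi this.le
    · intro i hi
      have hiK : i ≤ K := le_of_lt (lt_of_lt_of_le (mem_range.mp hi) hnK)
      have hiN' : i < N := lt_of_lt_of_le (lt_of_lt_of_le (mem_range.mp hi) hnK) hKN
      rw [Nat.cast_sub hiK, Nat.cast_sub hiN'.le]
      have hNi : (0:ℝ) < (N:ℝ) - i := by
        have : (i:ℝ) < N := by exact_mod_cast hiN'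
        linarith
      have hN0 : (0:ℝ) < (N:ℝ) := by exact_mod_cast hN
      rw [div_le_div_iff₀ hNi hN0]
      have hiKr : (i:ℝ) * K ≤ i * N := by
        have : (K:ℝ) ≤ N := by exact_mod_cast hKN
        nlinarith [Nat.cast_nonneg (α := ℝ) i]
      nlinarith
  · rw [Nat.choose_eq_zero_of_lt (lt_of_not_ge hnK)]
    simp only [Nat.cast_zero, zero_div]
    positivity

theorem binomial_conservative_zero_acceptance (N n M : ℕ)
    (hN : 1 ≤ N) (hMN : M ≤ N) (hnN : n ≤ N) :
    ((N - M).choose n : ℝ) / (N.choose n : ℝ) ≤ (((N : ℝ) - M) / N) ^ n := by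
  have := aux_hyper_le n (N - M) N (Nat.sub_le _ _) hN
  rwa [Nat.cast_sub hMN] at this
end

section
/- For every pair of natural numbers N, n with 1 ≤ N ≤ 14 and n < N, zero-acceptance sampling of n items from a lot of N items fails the discrete MID limiting-quality condition: the quality level of a lot with a single defective item satisfies (1 : ℝ)/N ≥ 7/100, and its hypergeometric acceptance probability satisfies Pac(1, N, n, 0) = (N − n : ℝ)/N ≥ 1/20. Hence for lot sizes N ≤ 14 only 100% testing (n = N) is admissible under the MID conditions. -/
theorem small_lots_require_full_testing (N n : ℕ) (hN₁ : 1 ≤ N) (hN₂ : N ≤ 14)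
    (hn : n < N) :
    (1 : ℝ) / N ≥ 7 / 100 ∧
      hypPac 1 N n 0 = ((N : ℝ) - n) / N ∧
        ((N : ℝ) - n) / N ≥ 1 / 20 := by
  have hN0 : (0 : ℝ) < (N : ℝ) := by exact_mod_cast hN₁
  have hNR : ((N : ℝ)) ≤ 14 := by exact_mod_cast hN₂
  have hnN : (n : ℝ) < N := by exact_mod_cast hn
  have hsub : (1 : ℝ) ≤ (N : ℝ) - n := by
    have : n + 1 ≤ N := hn
    have : ((n : ℝ) + 1) ≤ N := by exact_mod_cast this
    linarith
  refine ⟨?_, ?_, ?_⟩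
  · rw [ge_iff_le, div_le_div_iff₀ (by norm_num) hN0]
    linarith
  · have hkey : (N - 1).choose n * N = N.choose n * (N - n) := by
      have h := Nat.choose_mul_succ_eq (N - 1) n
      have hNs : N - 1 + 1 = N := Nat.succ_pred_eq_of_pos hN₁
      rw [hNs] at h
      exact h
    have hch : (0 : ℝ) < (N.choose n : ℝ) := by
      exact_mod_cast Nat.choose_pos hn.le
    have hkeyR : ((N - 1).choose n : ℝ) * N = (N.choose n : ℝ) * ((N : ℝ) - n) := by
      have := congrArg (fun x : ℕ => (x : ℝ)) hkey
      push_cast at this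
      rw [Nat.cast_sub hn.le] at this
      push_cast at this
      linarith
    simp only [hypPac, zero_add, Finset.sum_range_one, Nat.choose_zero_right, Nat.sub_zero,
      Nat.choose_one_right, one_mul]
    rw [div_eq_div_iff hch.ne' hN0.ne']
    linarith
  · rw [ge_iff_le, div_le_div_iff₀ (by norm_num) hN0]
    nlinarith
end

section
/- Under the purely discrete MID criterion, the minimal zero-acceptance sample size for a lot of size N = 43 is n = 22: for every natural number M with M ≤ 43 and (M : ℝ)/43 ≥ 7/100 one has Pac(M, 43, 22, 0) < 1/20, whereas M = 4 satisfies (4 : ℝ)/43 ≥ 7/100 and Pac(4, 43, 21, 0) ≥ 1/20. -/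
theorem discrete_minimal_sample_N43 :
    (∀ M : ℕ, M ≤ 43 → (M : ℝ) / 43 ≥ 7 / 100 → hypPac M 43 22 0 < 1 / 20) ∧
      ((4 : ℝ) / 43 ≥ 7 / 100 ∧ hypPac 4 43 21 0 ≥ 1 / 20) := by
  constructor
  · intro M _ hr
    have h3 : (3 : ℝ) < M := by
      have := (div_le_div_iff₀ (by norm_num) (by norm_num : (0:ℝ) < 43)).mp hr
      linarith
    have hM : 4 ≤ M := by exact_mod_cast h3
    have hsub : 43 - M ≤ 39 := by omega
    have hc : (43 - M).choose 22 ≤ (39).choose 22 := Nat.choose_le_choose 22 hsub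
    have hkey : ((39).choose 22 : ℝ) * 20 < ((43).choose 22 : ℝ) := by
      norm_num [Nat.choose]
    have hCpos : (0 : ℝ) < ((43).choose 22 : ℝ) := by exact_mod_cast Nat.choose_pos (by norm_num)
    simp only [hypPac, zero_add, Finset.sum_range_one, Nat.choose_zero_right, one_mul, Nat.sub_zero]
    rw [div_lt_iff₀ hCpos]
    have hc' : ((43 - M).choose 22 : ℝ) ≤ ((39).choose 22 : ℝ) := by exact_mod_cast hc
    nlinarith [hkey, hc']
  · constructor
    · norm_num
    · simp only [hypPac, zero_add, Finset.sum_range_one, Nat.choose_zero_right, one_mul, Nat.sub_zero]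
      rw [ge_iff_le, le_div_iff₀ (show (0:ℝ) < (Nat.choose 43 21 : ℝ) from by exact_mod_cast Nat.choose_pos (by norm_num))]
      norm_num [Nat.choose]
end

section
/- Under the gamma-extended hypergeometric criterion, the zero-acceptance sample size n = 41 satisfies the MID limiting-quality condition for lot size N = 3063 but not for lot size N = 3064: G(0.07·3063, 3063, 41) < 1/20 while G(0.07·3064, 3064, 41) ≥ 1/20, where G(M, N, n) = Γ(N−M+1)·Γ(N−n+1)/(Γ(N+1)·Γ(N−M−n+1)). -/
/-- Gamma-extended zero-acceptance hypergeometric probability. -/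
noncomputable def gammaPac (M : ℝ) (N n : ℕ) : ℝ :=
  Real.Gamma ((N : ℝ) - M + 1) * Real.Gamma ((N : ℝ) - n + 1) /
    (Real.Gamma ((N : ℝ) + 1) * Real.Gamma ((N : ℝ) - M - n + 1))

lemma gamma_shift (x : ℝ) (hx : 0 < x) (n : ℕ) :
    Real.Gamma (x + n) = (∏ i ∈ Finset.range n, (x + i)) * Real.Gamma x := by
  induction n with
  | zero => simp
  | succ n ih =>
    have h : x + n ≠ 0 := by positivity
    rw [Finset.prod_range_succ, Nat.cast_succ, ← add_assoc,
      Real.Gamma_add_one h, ih]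
    ring

lemma gammaPac_eq (M : ℝ) (N n : ℕ) (ha : 0 < (N : ℝ) - M - n + 1)
    (hb : 0 < (N : ℝ) - n + 1) :
    gammaPac M N n = (∏ i ∈ Finset.range n, ((N : ℝ) - M - n + 1 + i)) /
      (∏ i ∈ Finset.range n, ((N : ℝ) - n + 1 + i)) := by
  have h1 : (N : ℝ) - M + 1 = ((N : ℝ) - M - n + 1) + n := by ring
  have h2 : (N : ℝ) + 1 = ((N : ℝ) - n + 1) + n := by ring
  have hga : Real.Gamma ((N : ℝ) - M - n + 1) ≠ 0 := (Real.Gamma_pos_of_pos ha).ne'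
  have hgb : Real.Gamma ((N : ℝ) - n + 1) ≠ 0 := (Real.Gamma_pos_of_pos hb).ne'
  have hpb : (∏ i ∈ Finset.range n, ((N : ℝ) - n + 1 + i)) ≠ 0 := by
    refine (Finset.prod_pos fun i _ => ?_).ne'
    have : (0:ℝ) ≤ i := Nat.cast_nonneg i
    linarith
  rw [show gammaPac M N n = Real.Gamma ((N : ℝ) - M + 1) * Real.Gamma ((N : ℝ) - n + 1) /
    (Real.Gamma ((N : ℝ) + 1) * Real.Gamma ((N : ℝ) - M - n + 1)) from rfl, h1, h2,
    gamma_shift _ ha n, gamma_shift _ hb n]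
  field_simp

theorem gamma_extended_threshold_n41 :
    gammaPac (0.07 * 3063) 3063 41 < 1 / 20 ∧
      gammaPac (0.07 * 3064) 3064 41 ≥ 1 / 20 := by
  constructor
  · rw [gammaPac_eq (0.07 * 3063) 3063 41 (by norm_num) (by norm_num)]
    rw [div_lt_iff₀ (by positivity)]
    simp only [Finset.prod_range_succ, Finset.prod_range_zero]
    norm_num
  · rw [gammaPac_eq (0.07 * 3064) 3064 41 (by norm_num) (by norm_num)]
    rw [ge_iff_le, le_div_iff₀ (by positivity)]
    simp only [Finset.prod_range_succ, Finset.prod_range_zero]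
    norm_num
end
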